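/- Let U be an n×n complex unitary matrix whose minimal polynomial over ℂ equals X^m − g(X), where g is a polynomial with deg g < m and g is not constant (deg g ≥ 1). Then Σ_{i=0}^{m−1} |g_i|² > 1, where g_i denotes the coefficient of X^i in g. Consequently, there is no unitary m×m complex matrix whose 0-th row equals (g_0, g_1, …, g_{m−1}). -/

import Mathlib

open Matrix Polynomial

theorem stmt7 {n m : ℕ}
    (U : Matrix (Fin n) (Fin n) ℂ)
    (hU : U * Uᴴ = 1 ∧ Uᴴ * U = 1)
    (g : Polynomial ℂ)
    (hdeg : g.natDegree < m)
    (hnc : 1 ≤ g.natDegree)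
    (hmin : minpoly ℂ U = X ^ m - g) :
    (1 < ∑ i ∈ Finset.range m, ‖g.coeff i‖ ^ 2) ∧
    ¬ ∃ W : Matrix (Fin m) (Fin m) ℂ,
        (W * Wᴴ = 1 ∧ Wᴴ * W = 1) ∧
        ∀ i : Fin m, W ⟨0, by omega⟩ i = g.coeff (i : ℕ) := by
  have hm1 : 1 ≤ m := by omega
  have hint : IsIntegral ℂ U := Algebra.IsIntegral.isIntegral U
  have hmon : (minpoly ℂ U).Monic := minpoly.monic hint
  have hsplit : (minpoly ℂ U).Splits :=
    IsAlgClosed.splits _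
  -- all roots of the minimal polynomial have modulus 1
  have hroots1 : ∀ z ∈ (minpoly ℂ U).roots, ‖z‖ = 1 := by
    intro z hz
    have hzr : (minpoly ℂ U).IsRoot z := isRoot_of_mem_roots hz
    have he : z ∈ spectrum ℂ U := by
      rw [← AlgEquiv.spectrum_eq (Matrix.toLinAlgEquiv <| Pi.basisFun ℂ (Fin n)) U,
        ← Module.End.hasEigenvalue_iff_mem_spectrum]
      apply Module.End.hasEigenvalue_of_isRoot
      rwa [minpoly.algEquiv_eq]
    have he2 : z ∈ spectrum ℂ (Matrix.toEuclideanCLM (𝕜 := ℂ) U) := by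
      rwa [AlgEquiv.spectrum_eq (Matrix.toEuclideanCLM (𝕜 := ℂ) (n := Fin n)) U]
    have hunit : (Matrix.toEuclideanCLM (𝕜 := ℂ) U) ∈
        unitary (EuclideanSpace ℂ (Fin n) →L[ℂ] EuclideanSpace ℂ (Fin n)) := by
      constructor
      · rw [← map_star, ← _root_.map_mul]
        rw [Matrix.star_eq_conjTranspose, hU.2, _root_.map_one]
      · rw [← map_star, ← _root_.map_mul]
        rw [Matrix.star_eq_conjTranspose, hU.1, _root_.map_one]
    have hsphere := spectrum.subset_circle_of_unitary hunit he2
    simpa using Metric.mem_sphere.mp hsphere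
  -- |g.coeff 0| = 1
  have hc0 : ‖(minpoly ℂ U).coeff 0‖ = 1 := by
    rw [hsplit.coeff_zero_eq_prod_roots_of_monic hmon, norm_mul, norm_pow,
      norm_neg, norm_one, one_pow, one_mul]
    rw [show ‖(minpoly ℂ U).roots.prod‖ = ((minpoly ℂ U).roots.map (‖·‖)).prod from
      map_multiset_prod (normHom : ℂ →*₀ ℝ) _]
    apply Multiset.prod_eq_one
    intro x hx
    rw [Multiset.mem_map] at hx
    obtain ⟨z, hz, rfl⟩ := hx
    exact hroots1 z hz
  have hg0 : ‖g.coeff 0‖ = 1 := by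
    have : (minpoly ℂ U).coeff 0 = -g.coeff 0 := by
      rw [hmin, coeff_sub, coeff_X_pow, if_neg (by omega), zero_sub]
    rw [this, norm_neg] at hc0
    exact hc0
  have hgd : g.coeff g.natDegree ≠ 0 := by
    apply Polynomial.coeff_ne_zero_of_eq_degree
    rw [degree_eq_natDegree (fun h => by simp [h] at hnc)]
  have hsum : 1 < ∑ i ∈ Finset.range m, ‖g.coeff i‖ ^ 2 := by
    have hsub : ({0, g.natDegree} : Finset ℕ) ⊆ Finset.range m := by
      intro x hx
      simp only [Finset.mem_insert, Finset.mem_singleton] at hx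
      rcases hx with rfl | rfl <;> simp [Finset.mem_range] <;> omega
    have h2 : ∑ i ∈ ({0, g.natDegree} : Finset ℕ), ‖g.coeff i‖ ^ 2 ≤
        ∑ i ∈ Finset.range m, ‖g.coeff i‖ ^ 2 :=
      Finset.sum_le_sum_of_subset_of_nonneg hsub (fun i _ _ => by positivity)
    have h3 : ∑ i ∈ ({0, g.natDegree} : Finset ℕ), ‖g.coeff i‖ ^ 2 =
        1 + ‖g.coeff g.natDegree‖ ^ 2 := by
      rw [Finset.sum_pair (by omega : (0:ℕ) ≠ g.natDegree), hg0, one_pow]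
    have h4 : 0 < ‖g.coeff g.natDegree‖ ^ 2 := by
      have := (norm_pos_iff.mpr hgd)
      positivity
    linarith
  refine ⟨hsum, ?_⟩
  rintro ⟨W, ⟨hW1, -⟩, hWrow⟩
  have h00 : ∑ j : Fin m, W ⟨0, by omega⟩ j * star (W ⟨0, by omega⟩ j) = 1 := by
    have := congrFun (congrFun hW1 ⟨0, by omega⟩) ⟨0, by omega⟩
    simpa [Matrix.mul_apply, Matrix.conjTranspose_apply, Matrix.one_apply] using this
  have hkey : ((∑ i ∈ Finset.range m, ‖g.coeff i‖ ^ 2 : ℝ) : ℂ) = 1 := by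
    rw [← Fin.sum_univ_eq_sum_range (fun i => ‖g.coeff i‖ ^ 2) m]
    push_cast
    rw [← h00]
    refine Finset.sum_congr rfl fun j _ => ?_
    rw [hWrow j, Complex.star_def, Complex.mul_conj, Complex.normSq_eq_norm_sq]
    push_cast
    ring
  rw [Complex.ofReal_eq_one] at hkey
  linarith
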